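/- arXiv:2207.01314 — 5 statements merged into one kernel-verified Lean document; each statement's English description precedes it below -/
import Mathlib

section
/- Let p be a prime and let M be a 2×2 matrix with entries in ℚ_p. Suppose there exist α, β ∈ ℚ_p with ‖α‖ = 1 and ‖β‖ < 1 such that trace(M) = α + β and det(M) = α·β (so in particular α ≠ β and α − β is invertible). Then the sequence n ↦ M^{n!} converges, entrywise in the p-adic topology, to the matrix E := (α − β)^{-1} · (M − β·I), where I is the 2×2 identity matrix. Moreover the limit E is idempotent (E·E = E) and satisfies M·E = E·M = α·E. -/
open Filter Matrix

-- Fermat: p ∣ a^(p-1) - 1 for a unit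
lemma fermat_step (p : ℕ) [Fact p.Prime] (a : ℤ_[p]) (ha : ‖a‖ = 1) :
    (p : ℤ_[p]) ∣ a ^ (p - 1) - 1 := by
  have h0 : PadicInt.toZMod a ≠ 0 := by
    intro h
    have : a ∈ RingHom.ker (PadicInt.toZMod : ℤ_[p] →+* ZMod p) := h
    rw [PadicInt.ker_toZMod, IsLocalRing.mem_maximalIdeal] at this
    exact this (PadicInt.isUnit_iff.2 ha)
  have : PadicInt.toZMod (a ^ (p - 1) - 1) = 0 := by
    rw [map_sub, map_pow, _root_.map_one, ZMod.pow_card_sub_one_eq_one h0, sub_self]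
  have hm : a ^ (p - 1) - 1 ∈ RingHom.ker (PadicInt.toZMod : ℤ_[p] →+* ZMod p) := this
  rw [PadicInt.ker_toZMod, PadicInt.maximalIdeal_eq_span_p, Ideal.mem_span_singleton] at hm
  exact hm

-- ‖y^m - 1‖ ≤ ‖y - 1‖ in ℤ_p
lemma pow_sub_one_norm_le (p : ℕ) [Fact p.Prime] (y : ℤ_[p]) (m : ℕ) :
    ‖y ^ m - 1‖ ≤ ‖y - 1‖ := by
  have := geom_sum_mul y m
  calc ‖y ^ m - 1‖ = ‖(∑ i ∈ Finset.range m, y ^ i) * (y - 1)‖ := by rw [this]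
    _ ≤ ‖(∑ i ∈ Finset.range m, y ^ i)‖ * ‖y - 1‖ := norm_mul_le _ _
    _ ≤ 1 * ‖y - 1‖ := by
        apply mul_le_mul_of_nonneg_right (PadicInt.norm_le_one _) (norm_nonneg _)
    _ = ‖y - 1‖ := one_mul _

lemma unit_pow_factorial_tendsto (p : ℕ) [Fact p.Prime] (α : ℚ_[p]) (hα : ‖α‖ = 1) :
    Tendsto (fun n : ℕ => α ^ n.factorial) atTop (nhds 1) := by
  set a : ℤ_[p] := ⟨α, le_of_eq hα⟩ with ha_def
  have ha : ‖a‖ = 1 := hα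
  have hdvd := fermat_step p a ha
  rw [Metric.tendsto_atTop]
  intro ε hε
  -- choose k with p^{-(k+1)} < ε
  obtain ⟨k, hk⟩ : ∃ k : ℕ, ((p : ℝ) ^ (k+1))⁻¹ < ε := by
    have hp1R : (1:ℝ) < (p:ℝ) := by exact_mod_cast (Fact.out : p.Prime).one_lt
    obtain ⟨k, hk⟩ := pow_unbounded_of_one_lt (R := ℝ) ε⁻¹ hp1R
    exact ⟨k, by
      rw [inv_lt_comm₀ (by positivity) hε]
      calc ε⁻¹ < (p:ℝ) ^ k := hk
        _ ≤ (p:ℝ) ^ (k+1) := pow_le_pow_right₀ (by exact_mod_cast (Fact.out : p.Prime).one_le) (Nat.le_succ k)⟩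
  refine ⟨(p - 1) * p ^ k, fun n hn => ?_⟩
  have hp1 : 1 ≤ (p - 1) * p ^ k := by
    have h2 := (Fact.out : p.Prime).two_le
    exact Nat.mul_pos (by omega) (pow_pos (by omega) k)
  have hNdvd : (p - 1) * p ^ k ∣ n.factorial := Nat.dvd_factorial hp1 hn
  obtain ⟨m, hm⟩ := hNdvd
  -- key: ‖a^((p-1)*p^k) - 1‖ ≤ p^{-(k+1)}
  have key : ‖a ^ ((p - 1) * p ^ k) - 1‖ ≤ (p : ℝ) ^ (-(k+1 : ℕ) : ℤ) := by
    rw [PadicInt.norm_le_pow_iff_mem_span_pow, Ideal.mem_span_singleton]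
    have := dvd_sub_pow_of_dvd_sub hdvd k
    simpa [pow_mul, one_pow] using this
  have key2 : ‖a ^ n.factorial - 1‖ ≤ (p : ℝ) ^ (-(k+1:ℕ) : ℤ) := by
    rw [hm, pow_mul]
    exact le_trans (pow_sub_one_norm_le p _ m) key
  have hcast : (a : ℚ_[p]) = α := rfl
  rw [dist_eq_norm]
  have hc2 : α ^ n.factorial - 1 = ((a ^ n.factorial - 1 : ℤ_[p]) : ℚ_[p]) := by
    rw [← hcast]; push_cast; ring
  rw [hc2, PadicInt.padic_norm_e_of_padicInt]
  calc ‖a ^ n.factorial - 1‖ ≤ (p : ℝ) ^ (-(k+1:ℕ) : ℤ) := key2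
    _ = ((p:ℝ) ^ (k+1))⁻¹ := by rw [_root_.zpow_neg, zpow_natCast]
    _ < ε := hk

/-- Hida's ordinary projector, linear-algebraic form: if a `2×2` matrix `M` over `ℚ_p`
has trace `α + β` and determinant `α·β` with `‖α‖ = 1` and `‖β‖ < 1`, then `M^{n!}`
converges entrywise to the idempotent `E = (α−β)⁻¹ • (M − β•1)`, which satisfies
`M·E = E·M = α•E`. -/
theorem matrix_pow_factorial_tendsto_ordinary_projector (p : ℕ) [Fact p.Prime]
    (M : Matrix (Fin 2) (Fin 2) ℚ_[p]) (α β : ℚ_[p])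
    (hα : ‖α‖ = 1) (hβ : ‖β‖ < 1) (htr : M.trace = α + β) (hdet : M.det = α * β) :
    Filter.Tendsto (fun n : ℕ => M ^ n.factorial) Filter.atTop
        (nhds ((α - β)⁻¹ • (M - β • (1 : Matrix (Fin 2) (Fin 2) ℚ_[p])))) ∧
      ((α - β)⁻¹ • (M - β • (1 : Matrix (Fin 2) (Fin 2) ℚ_[p]))) *
          ((α - β)⁻¹ • (M - β • 1)) = (α - β)⁻¹ • (M - β • 1) ∧
      M * ((α - β)⁻¹ • (M - β • (1 : Matrix (Fin 2) (Fin 2) ℚ_[p]))) =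
          α • ((α - β)⁻¹ • (M - β • 1)) ∧
      ((α - β)⁻¹ • (M - β • (1 : Matrix (Fin 2) (Fin 2) ℚ_[p]))) * M =
          α • ((α - β)⁻¹ • (M - β • 1)) := by
  have hαβ : α - β ≠ 0 := by
    intro h
    rw [sub_eq_zero] at h
    rw [← h, hα] at hβ
    exact lt_irrefl 1 hβ
  set E : Matrix (Fin 2) (Fin 2) ℚ_[p] := (α - β)⁻¹ • (M - β • 1) with hE
  have htr' : M 0 0 + M 1 1 = α + β := by
    simpa [Matrix.trace_fin_two] using htr
  have hdet' : M 0 0 * M 1 1 - M 0 1 * M 1 0 = α * β := by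
    simpa [Matrix.det_fin_two] using hdet
  have hCH : (M - α • 1) * (M - β • (1 : Matrix (Fin 2) (Fin 2) ℚ_[p])) = 0 := by
    ext i j
    fin_cases i <;> fin_cases j <;>
      simp [Matrix.mul_apply, Fin.sum_univ_two, Matrix.one_apply] <;>
      ring_nf
    · linear_combination (M 0 0) * htr' - hdet'
    · linear_combination (M 0 1) * htr'
    · linear_combination (M 1 0) * htr'
    · linear_combination (M 1 1) * htr' - hdet'
  have hME : M * (M - β • 1) = α • (M - β • 1) := by
    have h := hCH
    rw [sub_mul, smul_mul_assoc, one_mul, sub_eq_zero] at h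
    exact h
  have hEM : (M - β • 1) * M = α • (M - β • 1) := by
    have hcomm : (M - β • 1) * M = M * (M - β • 1) := by
      rw [sub_mul, mul_sub, smul_mul_assoc, mul_smul_comm, one_mul, mul_one]
    rw [hcomm]; exact hME
  have hsq : (M - β • 1) * (M - β • 1) = (α - β) • (M - β • 1) := by
    rw [sub_mul, smul_mul_assoc, one_mul, hME, sub_smul]
  have hscale : (α - β) • E = M - β • 1 := by
    rw [hE, smul_smul, mul_inv_cancel₀ hαβ, one_smul]
  have hMEα : M * E = α • E := by
    rw [hE, mul_smul_comm, hME, smul_comm]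
  have hEMα : E * M = α • E := by
    rw [hE, smul_mul_assoc, hEM, smul_comm]
  have hidem : E * E = E := by
    rw [hE, smul_mul_assoc, mul_smul_comm, hsq, smul_smul, smul_smul,
      inv_mul_cancel_right₀ hαβ]
  clear_value E
  have hM : M = (α - β) • E + β • 1 := by rw [hscale]; abel
  have hM1E : M * (1 - E) = β • (1 - E) := by
    rw [mul_sub, mul_one, hMEα, smul_sub]
    rw [hM]
    module
  have hpow : ∀ k : ℕ, M ^ k = α ^ k • E + β ^ k • (1 - E) := by
    intro k
    induction k with
    | zero => simp
    | succ k ih =>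
      rw [pow_succ', ih, mul_add, mul_smul_comm, mul_smul_comm, hMEα, hM1E,
        smul_smul, smul_smul, ← pow_succ, ← pow_succ]
  have h1 : Tendsto (fun n : ℕ => α ^ n.factorial) atTop (nhds 1) :=
    unit_pow_factorial_tendsto p α hα
  have hfact : Tendsto (fun n : ℕ => n.factorial) atTop atTop :=
    tendsto_atTop_mono (fun n => Nat.self_le_factorial n) tendsto_id
  have h2 : Tendsto (fun n : ℕ => β ^ n.factorial) atTop (nhds 0) :=
    (tendsto_pow_atTop_nhds_zero_of_norm_lt_one hβ).comp hfact
  have hconv : Tendsto (fun n : ℕ => M ^ n.factorial) atTop (nhds E) := by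
    have := (h1.smul_const E).add (h2.smul_const (1 - E))
    rw [one_smul, zero_smul, add_zero] at this
    exact this.congr fun n => (hpow n.factorial).symm
  exact ⟨hconv, hidem, hMEα, hEMα⟩
end

section
/- Let p be a prime, let α ∈ ℤ_p be a p-adic unit and let β ∈ p·ℤ_p. Set a = α + β, ξ = α·β and δ = α − β. Then, in the space of 2×2 matrices over ℚ_p, the sequence n ↦ [[a, −1], [ξ, 0]]^{n!} converges entrywise to δ^{-1} · [[α, −1], [ξ, −β]]. -/
open Filter Matrix

lemma tendsto_matrix_fin_two {X K : Type*} [TopologicalSpace K] {l : Filter X}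
    {f11 f12 f21 f22 : X → K} {a b c d : K}
    (h11 : Tendsto f11 l (nhds a)) (h12 : Tendsto f12 l (nhds b))
    (h21 : Tendsto f21 l (nhds c)) (h22 : Tendsto f22 l (nhds d)) :
    Tendsto (fun x => !![f11 x, f12 x; f21 x, f22 x]) l (nhds !![a, b; c, d]) := by
  refine tendsto_pi_nhds.2 ?_
  intro i
  rw [tendsto_pi_nhds]
  intro j
  fin_cases i <;> fin_cases j <;> simpa

lemma up_pow_formula {K : Type*} [Field K] (A B : K) (h : A - B ≠ 0) (n : ℕ) :
    !![A + B, -1; A*B, 0] ^ n =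
      (A - B)⁻¹ • !![A^n*A - B^n*B, B^n - A^n; A*B*(A^n - B^n), A*B^n - A^n*B] := by
  induction n with
  | zero =>
      ext i j
      fin_cases i <;> fin_cases j <;>
        simp [Matrix.one_fin_two] <;> field_simp
  | succ n ih =>
      rw [pow_succ, ih, Matrix.smul_mul, Matrix.mul_fin_two]
      congr 1
      ext i j
      fin_cases i <;> fin_cases j <;> simp <;> ring


lemma pow_factorial_tendsto_one (p : ℕ) [Fact p.Prime] (α : ℤ_[p]) (hα : IsUnit α) :
    Tendsto (fun n : ℕ => (α : ℚ_[p]) ^ n.factorial) atTop (nhds 1) := by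
  have hprime : p.Prime := Fact.out
  have hp : (1 : ℝ) < p := Nat.one_lt_cast.2 hprime.one_lt
  have hdvd1 : (p : ℤ_[p]) ∣ α ^ (p - 1) - 1 := by
    rw [← Ideal.mem_span_singleton, ← PadicInt.maximalIdeal_eq_span_p, ← PadicInt.ker_toZMod,
      RingHom.mem_ker, map_sub, map_pow, _root_.map_one, sub_eq_zero]
    haveI : Fact p.Prime := ⟨hprime⟩
    exact ZMod.pow_card_sub_one_eq_one ((hα.map (PadicInt.toZMod (p := p))).ne_zero)
  -- key bound
  have key : ∀ k n : ℕ, (p - 1) * p ^ k ≤ n →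
      ‖α ^ n.factorial - 1‖ ≤ (p : ℝ) ^ (-(k + 1) : ℤ) := by
    intro k n hn
    have hdvd2 : (p : ℤ_[p]) ^ (k + 1) ∣ (α ^ (p - 1)) ^ p ^ k - 1 := by
      simpa using dvd_sub_pow_of_dvd_sub hdvd1 k
    have hfac : (p - 1) * p ^ k ∣ n.factorial :=
      Nat.dvd_factorial (Nat.mul_pos (Nat.sub_pos_of_lt hprime.one_lt) (Nat.pow_pos hprime.pos)) hn
    obtain ⟨c, hc⟩ := hfac
    have hdvd3 : (p : ℤ_[p]) ^ (k + 1) ∣ α ^ n.factorial - 1 := by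
      refine hdvd2.trans ?_
      have := sub_dvd_pow_sub_pow ((α ^ (p - 1)) ^ p ^ k) 1 c
      simpa [hc, one_pow, ← pow_mul, mul_assoc] using this
    have := (PadicInt.norm_le_pow_iff_mem_span_pow (α ^ n.factorial - 1) (k + 1)).2
      (Ideal.mem_span_singleton.2 hdvd3)
    simpa using this
  rw [Metric.tendsto_atTop]
  intro ε hε
  obtain ⟨k, hk⟩ := exists_pow_lt_of_lt_one hε (show (p : ℝ)⁻¹ < 1 by
    rw [inv_lt_one_iff₀]; right; exact hp)
  refine ⟨(p - 1) * p ^ k, fun n hn => ?_⟩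
  have hb := key k n hn
  have : ((p : ℝ))⁻¹ ^ (k + 1) ≤ (p:ℝ)⁻¹ ^ k := by
    apply pow_le_pow_of_le_one (by positivity) (by rw [inv_le_one_iff₀]; right; exact le_of_lt hp)
    omega
  have hnorm : ‖α ^ n.factorial - 1‖ < ε := by
    calc ‖α ^ n.factorial - 1‖ ≤ (p : ℝ) ^ (-(k + 1) : ℤ) := hb
      _ = ((p:ℝ))⁻¹ ^ (k+1) := by rw [inv_pow, ← zpow_natCast (p:ℝ), ← _root_.zpow_neg]; norm_num
      _ ≤ (p:ℝ)⁻¹ ^ k := this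
      _ < ε := hk
  rw [dist_eq_norm]
  have cast_eq : (α : ℚ_[p]) ^ n.factorial - 1 = ((α ^ n.factorial - 1 : ℤ_[p]) : ℚ_[p]) := by
    push_cast; ring
  rw [cast_eq, ← PadicInt.norm_def]
  exact hnorm


/-- Hida's ordinary projector on the 2-dimensional space on which `U_p` acts through
the matrix `[[a, −1], [ξ, 0]]`, with `a = α + β`, `ξ = α·β`, `α` a `p`-adic unit and
`β ∈ pℤ_p`: the sequence `n ↦ [[a, −1], [ξ, 0]]^{n!}` converges entrywise to
`δ⁻¹ • [[α, −1], [ξ, −β]]` where `δ = α − β`. -/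
theorem up_matrix_pow_factorial_tendsto (p : ℕ) [Fact p.Prime] (α β : ℤ_[p])
    (hα : IsUnit α) (hβ : β ∈ Ideal.span {(p : ℤ_[p])}) :
    Filter.Tendsto
      (fun n : ℕ =>
        (!![((α + β : ℤ_[p]) : ℚ_[p]), -1; ((α * β : ℤ_[p]) : ℚ_[p]), 0]) ^ n.factorial)
      Filter.atTop
      (nhds (((α - β : ℤ_[p]) : ℚ_[p])⁻¹ •
        !![(α : ℚ_[p]), -1; ((α * β : ℤ_[p]) : ℚ_[p]), -(β : ℚ_[p])])) := by
  have hprime : p.Prime := Fact.out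
  set A : ℚ_[p] := (α : ℚ_[p]) with hA
  set B : ℚ_[p] := (β : ℚ_[p]) with hB
  -- norms
  have hnormA : ‖α‖ = 1 := PadicInt.isUnit_iff.1 hα
  have hnormB : ‖β‖ < 1 := by
    have : ‖β‖ ≤ (p : ℝ) ^ (-(1 : ℕ) : ℤ) := by
      apply (PadicInt.norm_le_pow_iff_mem_span_pow β 1).2
      simpa using hβ
    calc ‖β‖ ≤ (p : ℝ) ^ (-(1:ℕ) : ℤ) := this
      _ < 1 := by
          rw [show (-(1:ℕ) : ℤ) = -1 by norm_num, _root_.zpow_neg_one, inv_lt_one_iff₀]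
          right; exact_mod_cast hprime.one_lt
  have hAB : A - B ≠ 0 := by
    intro h
    have : α - β = 0 := by
      have : ((α - β : ℤ_[p]) : ℚ_[p]) = 0 := by push_cast; rw [← h]
      exact (PadicInt.coe_eq_zero).1 this
    have heq : α = β := sub_eq_zero.1 this
    rw [heq] at hnormA
    rw [hnormA] at hnormB
    exact lt_irrefl 1 hnormB
  -- tendsto of the two sequences
  have htA : Tendsto (fun n : ℕ => A ^ n.factorial) atTop (nhds 1) :=
    pow_factorial_tendsto_one p α hα
  have htB : Tendsto (fun n : ℕ => B ^ n.factorial) atTop (nhds 0) := by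
    have hBn : ‖B‖ < 1 := by rw [hB, ← PadicInt.norm_def]; exact hnormB
    exact (tendsto_pow_atTop_nhds_zero_of_norm_lt_one hBn).comp factorial_tendsto_atTop
  -- rewrite the sequence via the power formula
  have hfun : ∀ n : ℕ,
      (!![((α + β : ℤ_[p]) : ℚ_[p]), -1; ((α * β : ℤ_[p]) : ℚ_[p]), 0]) ^ n.factorial =
        (A - B)⁻¹ • !![A ^ n.factorial * A - B ^ n.factorial * B,
            B ^ n.factorial - A ^ n.factorial;
            A * B * (A ^ n.factorial - B ^ n.factorial),
            A * B ^ n.factorial - A ^ n.factorial * B] := by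
    intro n
    have h1 : ((α + β : ℤ_[p]) : ℚ_[p]) = A + B := by push_cast; ring
    have h2 : ((α * β : ℤ_[p]) : ℚ_[p]) = A * B := by push_cast; ring
    rw [h1, h2]
    exact up_pow_formula A B hAB n.factorial
  simp only [hfun]
  -- rewrite the limit
  have hlim : (((α - β : ℤ_[p]) : ℚ_[p])⁻¹ •
      !![(α : ℚ_[p]), -1; ((α * β : ℤ_[p]) : ℚ_[p]), -(β : ℚ_[p])]) =
      (A - B)⁻¹ • !![(1:ℚ_[p]) * A - 0 * B, 0 - 1; A * B * (1 - 0), A * 0 - 1 * B] := by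
    have h2 : ((α * β : ℤ_[p]) : ℚ_[p]) = A * B := by push_cast; ring
    have h3 : ((α - β : ℤ_[p]) : ℚ_[p]) = A - B := by push_cast; ring
    rw [h2, h3]
    norm_num
    exact ⟨Or.inl rfl, Or.inl rfl⟩
  rw [hlim]
  exact (tendsto_matrix_fin_two
    ((htA.mul tendsto_const_nhds).sub (htB.mul tendsto_const_nhds))
    (htB.sub htA)
    (tendsto_const_nhds.mul (htA.sub htB))
    ((tendsto_const_nhds.mul htB).sub (htA.mul tendsto_const_nhds))).const_smul _
end

section
/- Let p be a prime, let α ∈ ℤ_p be a p-adic unit and let β' ∈ ℤ_p; set β = p·β', a = α + β, ξ = α·β (so that ξ·p^{-1} = α·β') and δ = α − β. Then, in the space of 2×2 matrices over ℚ_p, the sequence n ↦ [[0, p], [−α·β', a]]^{n!} converges entrywise to δ^{-1} · [[−β, p], [−α·β', α]]. -/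
open Filter Matrix

variable {p : ℕ} [Fact p.Prime]

theorem aux_totient_norm (u : ℤ_[p]) (hu : IsUnit u) (k : ℕ) :
    ‖u ^ (p ^ k).totient - 1‖ ≤ (p : ℝ) ^ (-(k : ℤ)) := by
  rw [PadicInt.norm_le_pow_iff_mem_span_pow, ← PadicInt.ker_toZModPow, RingHom.mem_ker,
    map_sub, map_pow, _root_.map_one, sub_eq_zero]
  have hu' := hu.map (PadicInt.toZModPow (p := p) k)
  rw [← hu'.unit_spec, ← Units.val_pow_eq_pow_val, ZMod.pow_totient, Units.val_one]

theorem aux_pow_sub_one (x : ℤ_[p]) (j : ℕ) : ‖x ^ j - 1‖ ≤ ‖x - 1‖ := by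
  calc ‖x ^ j - 1‖ = ‖(∑ i ∈ Finset.range j, x ^ i) * (x - 1)‖ := by rw [geom_sum_mul]
    _ ≤ ‖(∑ i ∈ Finset.range j, x ^ i)‖ * ‖x - 1‖ := norm_mul_le _ _
    _ ≤ 1 * ‖x - 1‖ :=
        mul_le_mul_of_nonneg_right (PadicInt.norm_le_one _) (norm_nonneg _)
    _ = ‖x - 1‖ := one_mul _

theorem aux_tendsto_one (u : ℤ_[p]) (hu : IsUnit u) :
    Tendsto (fun n : ℕ => u ^ n.factorial) atTop (nhds 1) := by
  have hp : (1 : ℝ) < p := by exact_mod_cast (Fact.out : p.Prime).one_lt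
  rw [NormedAddCommGroup.tendsto_atTop]
  intro ε hε
  obtain ⟨k, hk⟩ := exists_pow_lt_of_lt_one hε (by
    rw [inv_lt_one_iff₀]; right; exact hp : (p : ℝ)⁻¹ < 1)
  refine ⟨(p ^ k).totient, fun n hn => ?_⟩
  have htpos : 0 < (p ^ k).totient :=
    Nat.totient_pos.2 (pow_pos (Fact.out : p.Prime).pos k)
  obtain ⟨j, hj⟩ := Nat.dvd_factorial htpos hn
  calc ‖u ^ n.factorial - 1‖ = ‖(u ^ (p ^ k).totient) ^ j - 1‖ := by rw [← pow_mul, ← hj]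
    _ ≤ ‖u ^ (p ^ k).totient - 1‖ := aux_pow_sub_one _ _
    _ ≤ (p : ℝ) ^ (-(k : ℤ)) := aux_totient_norm u hu k
    _ = ((p : ℝ)⁻¹) ^ k := by rw [_root_.zpow_neg, zpow_natCast, inv_pow]
    _ < ε := hk


/-- The anti-ordinary projector on the 2-dimensional space on which `U_p^*` acts through
the matrix `[[0, p], [−αβ', a]]`, with `β = p·β'`, `a = α + β`, `α` a `p`-adic unit:
the sequence `n ↦ [[0, p], [−αβ', a]]^{n!}` converges entrywise to
`δ⁻¹ • [[−β, p], [−αβ', α]]` where `δ = α − β`. -/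
theorem up_star_matrix_pow_factorial_tendsto (p : ℕ) [Fact p.Prime] (α β' : ℤ_[p])
    (hα : IsUnit α) :
    Filter.Tendsto
      (fun n : ℕ =>
        (!![0, (p : ℚ_[p]);
            -((α * β' : ℤ_[p]) : ℚ_[p]), ((α + p * β' : ℤ_[p]) : ℚ_[p])]) ^ n.factorial)
      Filter.atTop
      (nhds (((α - p * β' : ℤ_[p]) : ℚ_[p])⁻¹ •
        !![-(((p : ℤ_[p]) * β' : ℤ_[p]) : ℚ_[p]), (p : ℚ_[p]);
           -((α * β' : ℤ_[p]) : ℚ_[p]), (α : ℚ_[p])])) := by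
  set M : Matrix (Fin 2) (Fin 2) ℚ_[p] :=
    !![0, (p : ℚ_[p]);
       -((α * β' : ℤ_[p]) : ℚ_[p]), ((α + p * β' : ℤ_[p]) : ℚ_[p])] with hM
  set A : Matrix (Fin 2) (Fin 2) ℚ_[p] :=
    ((α - p * β' : ℤ_[p]) : ℚ_[p])⁻¹ •
      !![-(((p : ℤ_[p]) * β' : ℤ_[p]) : ℚ_[p]), (p : ℚ_[p]);
         -((α * β' : ℤ_[p]) : ℚ_[p]), (α : ℚ_[p])] with hA
  set B : Matrix (Fin 2) (Fin 2) ℚ_[p] :=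
    ((α - p * β' : ℤ_[p]) : ℚ_[p])⁻¹ •
      !![(α : ℚ_[p]), -(p : ℚ_[p]);
         ((α * β' : ℤ_[p]) : ℚ_[p]), -(((p : ℤ_[p]) * β' : ℤ_[p]) : ℚ_[p])] with hB
  clear_value M A B
  -- the "discriminant" is nonzero
  have hd : ((α - p * β' : ℤ_[p]) : ℚ_[p]) ≠ 0 := by
    intro h
    have h2 : α = (p : ℤ_[p]) * β' := by
      have h2' : α - (p : ℤ_[p]) * β' = 0 := PadicInt.coe_eq_zero.mp h
      linear_combination h2'
    have h3 : ‖α‖ = 1 := PadicInt.isUnit_iff.mp hα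
    have h4 : ‖(p : ℤ_[p]) * β'‖ < 1 := by
      calc ‖(p : ℤ_[p]) * β'‖ = ‖(p : ℤ_[p])‖ * ‖β'‖ := norm_mul _ _
        _ ≤ ‖(p : ℤ_[p])‖ * 1 := by
            exact mul_le_mul_of_nonneg_left (PadicInt.norm_le_one _) (norm_nonneg _)
        _ = (p : ℝ)⁻¹ := by rw [mul_one, PadicInt.norm_p]
        _ < 1 := by
            rw [inv_lt_one_iff₀]; right
            exact_mod_cast (Fact.out : p.Prime).one_lt
    rw [h2] at h3
    linarith
  have hd' : (α : ℚ_[p]) - (p : ℚ_[p]) * (β' : ℚ_[p]) ≠ 0 := by push_cast at hd; exact hd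
  have hAB : A + B = 1 := by
    ext i j
    fin_cases i <;> fin_cases j <;>
      · simp only [hA, hB, Matrix.add_apply, Matrix.smul_apply, Matrix.one_apply,
          Matrix.of_apply, Matrix.cons_val', Matrix.cons_val_zero, Matrix.cons_val_one, Matrix.head_cons,
          Matrix.empty_val', Matrix.cons_val_fin_one, Matrix.head_fin_const, smul_eq_mul]
        push_cast
        field_simp [hd']
        try ring_nf
        try tauto
  have hMA : M * A = ((α : ℤ_[p]) : ℚ_[p]) • A := by
    ext i j
    fin_cases i <;> fin_cases j <;>
      · simp only [hM, hA, Matrix.mul_smul, Matrix.smul_apply, Matrix.mul_apply,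
          Fin.sum_univ_two, Matrix.of_apply, Matrix.cons_val', Matrix.cons_val_zero, Matrix.cons_val_one,
          Matrix.head_cons, Matrix.empty_val', Matrix.cons_val_fin_one, Matrix.head_fin_const,
          smul_eq_mul]
        push_cast
        field_simp
        try ring_nf
        try tauto
  have hMB : M * B = (((p : ℤ_[p]) * β' : ℤ_[p]) : ℚ_[p]) • B := by
    ext i j
    fin_cases i <;> fin_cases j <;>
      · simp only [hM, hB, Matrix.mul_smul, Matrix.smul_apply, Matrix.mul_apply,
          Fin.sum_univ_two, Matrix.of_apply, Matrix.cons_val', Matrix.cons_val_zero, Matrix.cons_val_one,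
          Matrix.head_cons, Matrix.empty_val', Matrix.cons_val_fin_one, Matrix.head_fin_const,
          smul_eq_mul]
        push_cast
        field_simp
        try ring_nf
        try tauto
  have hpow : ∀ m : ℕ, M ^ m =
      ((α : ℤ_[p]) : ℚ_[p]) ^ m • A + (((p : ℤ_[p]) * β' : ℤ_[p]) : ℚ_[p]) ^ m • B := by
    intro m
    induction m with
    | zero => simp [hAB]
    | succ m ih =>
        rw [pow_succ', ih, Matrix.mul_add, Matrix.mul_smul, Matrix.mul_smul, hMA, hMB,
          smul_smul, smul_smul, ← pow_succ, ← pow_succ]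
  have h1 : Tendsto (fun n : ℕ => ((α : ℤ_[p]) : ℚ_[p]) ^ n.factorial) atTop
      (nhds (1 : ℚ_[p])) := by
    have := (continuous_subtype_val.tendsto (1 : ℤ_[p])).comp (aux_tendsto_one α hα)
    exact this
  have h2 : Tendsto (fun n : ℕ => (((p : ℤ_[p]) * β' : ℤ_[p]) : ℚ_[p]) ^ n.factorial) atTop
      (nhds (0 : ℚ_[p])) := by
    have hb : ‖(((p : ℤ_[p]) * β' : ℤ_[p]) : ℚ_[p])‖ < 1 := by
      rw [PadicInt.padic_norm_e_of_padicInt]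
      calc ‖(p : ℤ_[p]) * β'‖ = ‖(p : ℤ_[p])‖ * ‖β'‖ := norm_mul _ _
        _ ≤ ‖(p : ℤ_[p])‖ * 1 :=
            mul_le_mul_of_nonneg_left (PadicInt.norm_le_one _) (norm_nonneg _)
        _ = (p : ℝ)⁻¹ := by rw [mul_one, PadicInt.norm_p]
        _ < 1 := by
            rw [inv_lt_one_iff₀]; right
            exact_mod_cast (Fact.out : p.Prime).one_lt
    exact (tendsto_pow_atTop_nhds_zero_of_norm_lt_one hb).comp
      (tendsto_atTop_mono Nat.self_le_factorial tendsto_id)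
  have hfin : Tendsto
      (fun n : ℕ => ((α : ℤ_[p]) : ℚ_[p]) ^ n.factorial • A +
        (((p : ℤ_[p]) * β' : ℤ_[p]) : ℚ_[p]) ^ n.factorial • B) atTop
      (nhds ((1 : ℚ_[p]) • A + (0 : ℚ_[p]) • B)) :=
    (h1.smul tendsto_const_nhds).add (h2.smul tendsto_const_nhds)
  simp only [one_smul, zero_smul, add_zero] at hfin
  simpa only [hpow] using hfin
end

section
/- Let p be a prime and r ≥ 1 an integer, and let d₁, d₂, d₃ be units of ℤ/p^rℤ. Suppose (v₁,v₂,v₃) and (w₁,w₂,w₃) are triples of primitive row vectors in (ℤ/p^rℤ)² satisfying D(v₁,v₂,v₃) = D(w₁,w₂,w₃) = (d₁,d₂,d₃). Then there exists a unique γ ∈ SL₂(ℤ/p^rℤ) such that vᵢ·γ = wᵢ for i = 1, 2, 3. In other words, SL₂(ℤ/p^rℤ), acting diagonally on the right, acts simply transitively on the set Σ_r[d₁,d₂,d₃] of triples of primitive vectors with determinant invariant (d₁,d₂,d₃). -/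
/-- A row vector `v ∈ (ℤ/p^rℤ)²` is primitive if it does not lie in `p·(ℤ/p^rℤ)²`. -/
def IsPrimitiveVec (p r : ℕ) (v : Fin 2 → ZMod (p ^ r)) : Prop :=
  ∀ w : Fin 2 → ZMod (p ^ r), v ≠ (p : ZMod (p ^ r)) • w

/-- The determinant of the `2×2` matrix with rows `v` and `w`. -/
def det2 {R : Type*} [CommRing R] (v w : Fin 2 → R) : R :=
  v 0 * w 1 - v 1 * w 0

/-- `SL₂(ℤ/p^rℤ)`, acting diagonally on the right, acts simply transitively on the set
of triples of primitive vectors with a fixed determinant invariant `(d₁,d₂,d₃)` made of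
units: given two such triples, there is a unique `γ ∈ SL₂(ℤ/p^rℤ)` carrying one to the
other. -/
theorem SL2_simply_transitive_on_sigma (p r : ℕ) (hp : p.Prime) (hr : 1 ≤ r)
    (d₁ d₂ d₃ : ZMod (p ^ r)) (hd₁ : IsUnit d₁) (hd₂ : IsUnit d₂) (hd₃ : IsUnit d₃)
    (v₁ v₂ v₃ w₁ w₂ w₃ : Fin 2 → ZMod (p ^ r))
    (hv₁ : IsPrimitiveVec p r v₁) (hv₂ : IsPrimitiveVec p r v₂)
    (hv₃ : IsPrimitiveVec p r v₃)
    (hw₁ : IsPrimitiveVec p r w₁) (hw₂ : IsPrimitiveVec p r w₂)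
    (hw₃ : IsPrimitiveVec p r w₃)
    (hDv : det2 v₂ v₃ = d₁ ∧ det2 v₃ v₁ = d₂ ∧ det2 v₁ v₂ = d₃)
    (hDw : det2 w₂ w₃ = d₁ ∧ det2 w₃ w₁ = d₂ ∧ det2 w₁ w₂ = d₃) :
    ∃! γ : Matrix.SpecialLinearGroup (Fin 2) (ZMod (p ^ r)),
      Matrix.vecMul v₁ (γ : Matrix (Fin 2) (Fin 2) (ZMod (p ^ r))) = w₁ ∧
      Matrix.vecMul v₂ (γ : Matrix (Fin 2) (Fin 2) (ZMod (p ^ r))) = w₂ ∧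
      Matrix.vecMul v₃ (γ : Matrix (Fin 2) (Fin 2) (ZMod (p ^ r))) = w₃ := by
  obtain ⟨hDv1, hDv2, hDv3⟩ := hDv
  obtain ⟨hDw1, hDw2, hDw3⟩ := hDw
  set M : Matrix (Fin 2) (Fin 2) (ZMod (p ^ r)) := Matrix.of ![v₁, v₂] with hM
  set N : Matrix (Fin 2) (Fin 2) (ZMod (p ^ r)) := Matrix.of ![w₁, w₂] with hN
  have hMdet : M.det = d₃ := by
    rw [Matrix.det_fin_two]; simp [hM, ← hDv3, det2]
  have hNdet : N.det = d₃ := by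
    rw [Matrix.det_fin_two]; simp [hN, ← hDw3, det2]
  have hMunit : IsUnit M.det := hMdet ▸ hd₃
  have hMi : M⁻¹ * M = 1 := Matrix.nonsing_inv_mul M hMunit
  have hMi' : M * M⁻¹ = 1 := Matrix.mul_nonsing_inv M hMunit
  have hdet1 : (M⁻¹ * N).det = 1 := by
    rw [Matrix.det_mul, Matrix.det_nonsing_inv, hMdet, hNdet, Ring.inverse_mul_cancel _ hd₃]
  set G : Matrix (Fin 2) (Fin 2) (ZMod (p ^ r)) := M⁻¹ * N with hG
  have hrow : ∀ i, Matrix.vecMul (M i) G = N i := by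
    intro i
    have : M * G = N := by rw [hG, ← mul_assoc, hMi', one_mul]
    funext j
    have := congrFun (congrFun this i) j
    rw [Matrix.mul_apply] at this
    simpa [Matrix.vecMul, dotProduct] using this
  have h1 : Matrix.vecMul v₁ G = w₁ := by
    have := hrow 0; exact this
  have h2 : Matrix.vecMul v₂ G = w₂ := by
    have := hrow 1; exact this
  have hcomb : ∀ (a b c : Fin 2 → ZMod (p ^ r)), det2 a b = d₃ → det2 b c = d₁ → det2 c a = d₂ →
      d₃ • c = (-d₁) • a + (-d₂) • b := by
    intro a b c h3 h1' h2'
    funext i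
    fin_cases i <;>
    · simp only [Fin.zero_eta, Fin.mk_one, Fin.isValue, Pi.add_apply, Pi.smul_apply,
        smul_eq_mul, ← h3, ← h1', ← h2', det2]
      ring
  have hv : d₃ • v₃ = (-d₁) • v₁ + (-d₂) • v₂ := hcomb v₁ v₂ v₃ hDv3 hDv1 hDv2
  have hw : d₃ • w₃ = (-d₁) • w₁ + (-d₂) • w₂ := hcomb w₁ w₂ w₃ hDw3 hDw1 hDw2
  have h3 : Matrix.vecMul v₃ G = w₃ := by
    have key : d₃ • Matrix.vecMul v₃ G = d₃ • w₃ := by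
      rw [← Matrix.smul_vecMul, hv, hw, Matrix.add_vecMul, Matrix.smul_vecMul,
        Matrix.smul_vecMul, h1, h2]
    funext j
    have := congrFun key j
    simp only [Pi.smul_apply, smul_eq_mul] at this
    exact hd₃.mul_left_cancel this
  refine ⟨⟨G, hdet1⟩, ⟨h1, h2, h3⟩, ?_⟩
  rintro ⟨γ, hγdet⟩ ⟨hγ1, hγ2, hγ3⟩
  have hMγ : M * γ = N := by
    funext i j
    rw [Matrix.mul_apply]
    fin_cases i
    · simpa [hM, hN, Matrix.vecMul, dotProduct] using (congrFun hγ1 j : _)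
    · simpa [hM, hN, Matrix.vecMul, dotProduct] using (congrFun hγ2 j : _)
  have : γ = G := by
    rw [hG, ← hMγ, ← mul_assoc, hMi, one_mul]
  exact Subtype.ext this
end

section
/- Let R be a nontrivial commutative ring. For i = 1, 2, 3 let Vᵢ be a free R-module of rank 2 and let Aᵢ ⊆ Vᵢ be a submodule that is free of rank 1 and such that the quotient Vᵢ/Aᵢ is free of rank 1. Inside V := V₁ ⊗_R V₂ ⊗_R V₃, define: V^{++} as the image of A₁⊗A₂⊗A₃ under the map induced by the inclusions; V^{+} as the sum of the images of V₁⊗A₂⊗A₃, A₁⊗V₂⊗A₃ and A₁⊗A₂⊗V₃; and V^{−} as the sum of the images of V₁⊗V₂⊗A₃, V₁⊗A₂⊗V₃ and A₁⊗V₂⊗V₃. Then 0 ⊆ V^{++} ⊆ V^{+} ⊆ V^{−} ⊆ V is a filtration by submodules that are free of ranks 1, 4, 7 (with V free of rank 8), and the successive quotients V^{++}, V^{+}/V^{++}, V^{−}/V^{+}, V/V^{−} are free R-modules of ranks 1, 3, 3, 1 respectively. -/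
open TensorProduct Submodule

section Gen

variable {R : Type*} [CommRing R] [Nontrivial R]

lemma exists_gen_of_free_rank_one {M : Type*} [AddCommGroup M] [Module R M]
    (hf : Module.Free R M) (hr : Module.rank R M = 1) :
    ∃ m : M, Submodule.span R {m} = ⊤ ∧ ∀ c : R, c • m = 0 → c = 0 := by
  classical
  have h1 : Cardinal.mk (Module.Free.ChooseBasisIndex R M) = 1 := by
    rw [← Module.Free.rank_eq_card_chooseBasisIndex, hr]
  obtain ⟨hs, hn⟩ := Cardinal.eq_one_iff_unique.mp h1
  haveI : Unique (Module.Free.ChooseBasisIndex R M) := uniqueOfSubsingleton hn.some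
  set b := Module.Free.chooseBasis R M with hb
  refine ⟨b default, ?_, ?_⟩
  · have hrange : Set.range b = {b default} := by
      ext x
      simp only [Set.mem_range, Set.mem_singleton_iff]
      constructor
      · rintro ⟨i, rfl⟩; rw [Unique.eq_default i]
      · rintro rfl; exact ⟨default, rfl⟩
    rw [← hrange, b.span_eq]
  · intro c hc
    have h2 : b.repr (c • b default) = 0 := by rw [hc]; simp
    rw [map_smul, b.repr_self] at h2
    have h3 := DFunLike.congr_fun h2 default
    simpa using h3

lemma exists_basis_of_sub {V : Type*} [AddCommGroup V] [Module R V]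
    (A : Submodule R V)
    (hAf : Module.Free R A) (hAr : Module.rank R A = 1)
    (hQf : Module.Free R (V ⧸ A)) (hQr : Module.rank R (V ⧸ A) = 1) :
    ∃ e : Module.Basis (Fin 2) R V, A = Submodule.span R {e 0} := by
  obtain ⟨a₀, ha₀span, ha₀reg⟩ := exists_gen_of_free_rank_one hAf hAr
  obtain ⟨q₀, hq₀span, hq₀reg⟩ := exists_gen_of_free_rank_one hQf hQr
  obtain ⟨bb, hbb⟩ := A.mkQ_surjective q₀
  set a : V := (a₀ : V) with ha
  have hA : A = Submodule.span R {a} := by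
    conv_lhs => rw [← Submodule.range_subtype A, ← Submodule.map_top, ← ha₀span]
    rw [Submodule.map_span, Set.image_singleton]
    rfl
  have haA : a ∈ A := a₀.2
  have hmka : A.mkQ a = 0 := by
    simpa [Submodule.mkQ_apply, Submodule.Quotient.mk_eq_zero] using haA
  have hli : LinearIndependent R ![a, bb] := by
    rw [LinearIndependent.pair_iff]
    intro s t hst
    have h1 : t • q₀ = 0 := by
      have h := congrArg A.mkQ hst
      simpa [map_add, map_smul, hbb, hmka] using h
    have ht : t = 0 := hq₀reg t h1
    subst ht
    have hs' : s • a = 0 := by simpa using hst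
    have : s • a₀ = 0 := by
      apply Subtype.ext
      simpa using hs'
    exact ⟨ha₀reg s this, rfl⟩
  have hsp : ⊤ ≤ Submodule.span R (Set.range ![a, bb]) := by
    intro x _
    have hx : A.mkQ x ∈ Submodule.span R {q₀} := by rw [hq₀span]; trivial
    obtain ⟨c, hc⟩ := Submodule.mem_span_singleton.mp hx
    have hxa : x - c • bb ∈ A := by
      rw [← Submodule.Quotient.mk_eq_zero A]
      have h0 : A.mkQ (x - c • bb) = 0 := by
        simp [map_sub, map_smul, hbb, ← hc]
      simpa [Submodule.mkQ_apply] using h0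
    rw [hA] at hxa
    obtain ⟨d, hd⟩ := Submodule.mem_span_singleton.mp hxa
    have hxval : x = d • a + c • bb := by
      rw [hd]; abel
    rw [hxval]
    have hma : a ∈ Set.range ![a, bb] := ⟨0, rfl⟩
    have hmb : bb ∈ Set.range ![a, bb] := ⟨1, rfl⟩
    exact Submodule.add_mem _
      (Submodule.smul_mem _ _ (Submodule.subset_span hma))
      (Submodule.smul_mem _ _ (Submodule.subset_span hmb))
  refine ⟨Module.Basis.mk hli hsp, ?_⟩
  rw [Module.Basis.mk_apply]
  simpa using hA

end Gen

section SpanImage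

variable {R : Type*} [CommRing R] [Nontrivial R]
variable {M : Type*} [AddCommGroup M] [Module R M] {ι : Type*}

/-- Basis of the span of the image of a subset of a basis. -/
noncomputable def Basis.spanImage (b : Module.Basis ι R M) (s : Set ι) :
    Module.Basis s R ↥(Submodule.span R (b '' s)) :=
  (Module.Basis.span (b.linearIndependent.comp (Subtype.val : s → ι) Subtype.val_injective)).map
    (LinearEquiv.ofEq _ _ (by rw [Set.range_comp, Subtype.range_val]))

lemma Basis.spanImage_apply (b : Module.Basis ι R M) (s : Set ι) (i : s) :
    (Basis.spanImage b s i : M) = b i := by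
  simp only [Basis.spanImage, Module.Basis.map_apply, LinearEquiv.coe_ofEq_apply, Module.Basis.span_apply,
    Function.comp_apply]

lemma spanImage_free_rank (b : Module.Basis ι R M) (s : Set ι) (hs : s.Finite) :
    Module.Free R ↥(Submodule.span R (b '' s)) ∧
      Module.rank R ↥(Submodule.span R (b '' s)) = (Nat.card s : Cardinal) := by
  haveI := hs.fintype
  refine ⟨Module.Free.of_basis (Basis.spanImage b s), ?_⟩
  rw [rank_eq_card_basis (Basis.spanImage b s), Nat.card_eq_fintype_card]

lemma isCompl_span_image (b : Module.Basis ι R M) (s : Set ι) :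
    IsCompl (Submodule.span R (b '' s)) (Submodule.span R (b '' sᶜ)) := by
  constructor
  · rw [Submodule.disjoint_def]
    intro x hx1 hx2
    rw [b.mem_span_image] at hx1 hx2
    have hsupp : (b.repr x).support = ∅ := by
      by_contra h
      obtain ⟨i, hi⟩ := Finset.nonempty_of_ne_empty h
      exact (hx2 (Finset.mem_coe.mpr hi)) (hx1 (Finset.mem_coe.mpr hi))
    exact b.repr.map_eq_zero_iff.mp (Finsupp.support_eq_empty.mp hsupp)
  · rw [codisjoint_iff]
    rw [← Submodule.span_union, ← Set.image_union, Set.union_compl_self, Set.image_univ,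
      b.span_eq]

lemma quot_span_image (b : Module.Basis ι R M) (s : Set ι) (hsc : (sᶜ : Set ι).Finite) :
    Module.Free R (M ⧸ Submodule.span R (b '' s)) ∧
      Module.rank R (M ⧸ Submodule.span R (b '' s)) = (Nat.card ↥(sᶜ) : Cardinal) := by
  have h := isCompl_span_image b s
  let e := Submodule.quotientEquivOfIsCompl _ _ h
  obtain ⟨hf, hr⟩ := spanImage_free_rank b (sᶜ) hsc
  exact ⟨Module.Free.of_equiv e.symm, by rw [e.rank_eq, hr]⟩

lemma nested_span_image (b : Module.Basis ι R M) (s t : Set ι) (hst : s ⊆ t)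
    (hd : (t \ s).Finite) :
    Module.Free R (↥(Submodule.span R (b '' t)) ⧸
        (Submodule.comap (Submodule.span R (b '' t)).subtype (Submodule.span R (b '' s)))) ∧
      Module.rank R (↥(Submodule.span R (b '' t)) ⧸
        (Submodule.comap (Submodule.span R (b '' t)).subtype (Submodule.span R (b '' s)))) =
        (Nat.card ↥(t \ s) : Cardinal) := by
  classical
  set Q := Submodule.span R (b '' t) with hQ
  set bt := Basis.spanImage b t with hbt
  set s' : Set ↥t := {i : ↥t | (i : ι) ∈ s} with hs'
  have hmap : Submodule.map Q.subtype (Submodule.span R (bt '' s')) =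
      Submodule.span R (b '' s) := by
    rw [Submodule.map_span]
    congr 1
    ext x
    constructor
    · rintro ⟨y, ⟨i, hi, rfl⟩, rfl⟩
      exact ⟨i, hi, (Basis.spanImage_apply b t i).symm⟩
    · rintro ⟨j, hj, rfl⟩
      exact ⟨bt ⟨j, hst hj⟩, ⟨⟨j, hst hj⟩, hj, rfl⟩, Basis.spanImage_apply b t ⟨j, hst hj⟩⟩
  have hcomap : Submodule.comap Q.subtype (Submodule.span R (b '' s)) =
      Submodule.span R (bt '' s') := by
    rw [← hmap, Submodule.comap_map_eq, Submodule.ker_subtype, sup_bot_eq]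
  rw [hcomap]
  have heq : (fun i => (bt : ↥t → ↥Q) i) '' s' = bt '' s' := rfl
  -- equivalence between (s'ᶜ : Set ↥t) and (t \ s : Set ι)
  have eqv : ↥(s'ᶜ : Set ↥t) ≃ ↥(t \ s) :=
    { toFun := fun i => ⟨(i : ↥t), ⟨(i : ↥t).2, i.2⟩⟩
      invFun := fun j => ⟨⟨(j : ι), j.2.1⟩, j.2.2⟩
      left_inv := fun i => rfl
      right_inv := fun j => rfl }
  haveI : Finite ↥(t \ s) := hd.to_subtype
  haveI : Finite ↥(s'ᶜ : Set ↥t) := Finite.of_equiv _ eqv.symm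
  have hsc : (s'ᶜ : Set ↥t).Finite := Set.toFinite _
  obtain ⟨hf, hr⟩ := quot_span_image bt s' hsc
  refine ⟨hf, ?_⟩
  rw [hr, Nat.card_congr eqv]

end SpanImage
section RangeMap

lemma range_map_eq_span {R M₁ M₂ N₁ N₂ : Type*} [CommRing R]
    [AddCommGroup M₁] [Module R M₁] [AddCommGroup M₂] [Module R M₂]
    [AddCommGroup N₁] [Module R N₁] [AddCommGroup N₂] [Module R N₂]
    (f : M₁ →ₗ[R] N₁) (g : M₂ →ₗ[R] N₂) {S : Set N₁} {T : Set N₂}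
    (hf : LinearMap.range f = Submodule.span R S)
    (hg : LinearMap.range g = Submodule.span R T) :
    LinearMap.range (TensorProduct.map f g) =
      Submodule.span R (Set.image2 (· ⊗ₜ[R] ·) S T) := by
  rw [TensorProduct.range_map_eq_span_tmul]
  have h1 : {t | ∃ m n, f m ⊗ₜ[R] g n = t}
      = Set.image2 (fun m n => TensorProduct.mk R N₁ N₂ m n)
          (LinearMap.range f : Set N₁) (LinearMap.range g : Set N₂) := by
    ext x
    constructor
    · rintro ⟨m, n, rfl⟩
      exact ⟨f m, ⟨m, rfl⟩, g n, ⟨n, rfl⟩, rfl⟩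
    · rintro ⟨y, ⟨m, rfl⟩, z, ⟨n, rfl⟩, rfl⟩
      exact ⟨m, n, rfl⟩
  rw [h1, ← Submodule.map₂_eq_span_image2, hf, hg, Submodule.map₂_span_span]
  rfl

end RangeMap

noncomputable def comap_quot_equiv {R M : Type*} [CommRing R] [AddCommGroup M] [Module R M]
    {P Q P' Q' : Submodule R M} (hP : P = P') (hQ : Q = Q') :
    (↥Q ⧸ Submodule.comap Q.subtype P) ≃ₗ[R] (↥Q' ⧸ Submodule.comap Q'.subtype P') := by
  subst hP; subst hQ; exact LinearEquiv.refl _ _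

set_option maxHeartbeats 1000000 in
/-- The four-step filtration of a triple tensor product of rank-2 free modules, each
equipped with a rank-1 free submodule with rank-1 free quotient: the submodules
`V^{++} ⊆ V^{+} ⊆ V^{−} ⊆ V` are free of ranks `1, 4, 7` (with `V` free of rank `8`)
and the successive quotients `V^{++}`, `V^{+}/V^{++}`, `V^{−}/V^{+}`, `V/V^{−}` are
free of ranks `1, 3, 3, 1`. -/
theorem triple_tensor_four_step_filtration {R : Type*} [CommRing R] [Nontrivial R]
    {V₁ V₂ V₃ : Type*}
    [AddCommGroup V₁] [Module R V₁] [AddCommGroup V₂] [Module R V₂]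
    [AddCommGroup V₃] [Module R V₃]
    (hV₁f : Module.Free R V₁) (hV₁r : Module.rank R V₁ = 2)
    (hV₂f : Module.Free R V₂) (hV₂r : Module.rank R V₂ = 2)
    (hV₃f : Module.Free R V₃) (hV₃r : Module.rank R V₃ = 2)
    (A₁ : Submodule R V₁) (A₂ : Submodule R V₂) (A₃ : Submodule R V₃)
    (hA₁f : Module.Free R A₁) (hA₁r : Module.rank R A₁ = 1)
    (hA₂f : Module.Free R A₂) (hA₂r : Module.rank R A₂ = 1)
    (hA₃f : Module.Free R A₃) (hA₃r : Module.rank R A₃ = 1)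
    (hQ₁f : Module.Free R (V₁ ⧸ A₁)) (hQ₁r : Module.rank R (V₁ ⧸ A₁) = 1)
    (hQ₂f : Module.Free R (V₂ ⧸ A₂)) (hQ₂r : Module.rank R (V₂ ⧸ A₂) = 1)
    (hQ₃f : Module.Free R (V₃ ⧸ A₃)) (hQ₃r : Module.rank R (V₃ ⧸ A₃) = 1) :
    let Vpp : Submodule R (V₁ ⊗[R] (V₂ ⊗[R] V₃)) :=
      LinearMap.range (TensorProduct.map A₁.subtype (TensorProduct.map A₂.subtype A₃.subtype))
    let Vp : Submodule R (V₁ ⊗[R] (V₂ ⊗[R] V₃)) :=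
      LinearMap.range (TensorProduct.map (LinearMap.id : V₁ →ₗ[R] V₁)
          (TensorProduct.map A₂.subtype A₃.subtype)) ⊔
        LinearMap.range (TensorProduct.map A₁.subtype
          (TensorProduct.map (LinearMap.id : V₂ →ₗ[R] V₂) A₃.subtype)) ⊔
        LinearMap.range (TensorProduct.map A₁.subtype
          (TensorProduct.map A₂.subtype (LinearMap.id : V₃ →ₗ[R] V₃)))
    let Vm : Submodule R (V₁ ⊗[R] (V₂ ⊗[R] V₃)) :=
      LinearMap.range (TensorProduct.map (LinearMap.id : V₁ →ₗ[R] V₁)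
          (TensorProduct.map (LinearMap.id : V₂ →ₗ[R] V₂) A₃.subtype)) ⊔
        LinearMap.range (TensorProduct.map (LinearMap.id : V₁ →ₗ[R] V₁)
          (TensorProduct.map A₂.subtype (LinearMap.id : V₃ →ₗ[R] V₃))) ⊔
        LinearMap.range (TensorProduct.map A₁.subtype
          (TensorProduct.map (LinearMap.id : V₂ →ₗ[R] V₂) (LinearMap.id : V₃ →ₗ[R] V₃)))
    Vpp ≤ Vp ∧ Vp ≤ Vm ∧
      Module.Free R Vpp ∧ Module.rank R Vpp = 1 ∧
      Module.Free R Vp ∧ Module.rank R Vp = 4 ∧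
      Module.Free R Vm ∧ Module.rank R Vm = 7 ∧
      Module.Free R (V₁ ⊗[R] (V₂ ⊗[R] V₃)) ∧
      Module.rank R (V₁ ⊗[R] (V₂ ⊗[R] V₃)) = 8 ∧
      Module.Free R
        (@HasQuotient.Quotient ↥Vp (Submodule R ↥Vp) Submodule.hasQuotient
          (Vpp.comap Vp.subtype)) ∧
      Module.rank R
        (@HasQuotient.Quotient ↥Vp (Submodule R ↥Vp) Submodule.hasQuotient
          (Vpp.comap Vp.subtype)) = 3 ∧
      Module.Free R
        (@HasQuotient.Quotient ↥Vm (Submodule R ↥Vm) Submodule.hasQuotient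
          (Vp.comap Vm.subtype)) ∧
      Module.rank R
        (@HasQuotient.Quotient ↥Vm (Submodule R ↥Vm) Submodule.hasQuotient
          (Vp.comap Vm.subtype)) = 3 ∧
      Module.Free R ((V₁ ⊗[R] (V₂ ⊗[R] V₃)) ⧸ Vm) ∧
      Module.rank R ((V₁ ⊗[R] (V₂ ⊗[R] V₃)) ⧸ Vm) = 1 := by
  classical
  intro Vpp Vp Vm
  obtain ⟨e₁, hA₁⟩ := exists_basis_of_sub A₁ hA₁f hA₁r hQ₁f hQ₁r
  obtain ⟨e₂, hA₂⟩ := exists_basis_of_sub A₂ hA₂f hA₂r hQ₂f hQ₂r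
  obtain ⟨e₃, hA₃⟩ := exists_basis_of_sub A₃ hA₃f hA₃r hQ₃f hQ₃r
  set E : Module.Basis (Fin 2 × Fin 2 × Fin 2) R (V₁ ⊗[R] (V₂ ⊗[R] V₃)) :=
    e₁.tensorProduct (e₂.tensorProduct e₃) with hE
  have hEapp : ∀ i j k : Fin 2, E (i, j, k) = e₁ i ⊗ₜ[R] (e₂ j ⊗ₜ[R] e₃ k) := by
    intro i j k
    rw [hE, Module.Basis.tensorProduct_apply', Module.Basis.tensorProduct_apply']
  have hr1 : LinearMap.range A₁.subtype = Submodule.span R {e₁ 0} := by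
    rw [Submodule.range_subtype, hA₁]
  have hr2 : LinearMap.range A₂.subtype = Submodule.span R {e₂ 0} := by
    rw [Submodule.range_subtype, hA₂]
  have hr3 : LinearMap.range A₃.subtype = Submodule.span R {e₃ 0} := by
    rw [Submodule.range_subtype, hA₃]
  have hid1 : LinearMap.range (LinearMap.id : V₁ →ₗ[R] V₁)
      = Submodule.span R {e₁ 0, e₁ 1} := by
    rw [LinearMap.range_id, ← e₁.span_eq]
    congr 1
    ext x
    simp [Fin.exists_fin_two, eq_comm]
  have hid2 : LinearMap.range (LinearMap.id : V₂ →ₗ[R] V₂)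
      = Submodule.span R {e₂ 0, e₂ 1} := by
    rw [LinearMap.range_id, ← e₂.span_eq]
    congr 1
    ext x
    simp [Fin.exists_fin_two, eq_comm]
  have hid3 : LinearMap.range (LinearMap.id : V₃ →ₗ[R] V₃)
      = Submodule.span R {e₃ 0, e₃ 1} := by
    rw [LinearMap.range_id, ← e₃.span_eq]
    congr 1
    ext x
    simp [Fin.exists_fin_two, eq_comm]
  -- inner ranges in V₂ ⊗ V₃
  have h00 : LinearMap.range (TensorProduct.map A₂.subtype A₃.subtype)
      = Submodule.span R {e₂ 0 ⊗ₜ[R] e₃ 0} := by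
    rw [range_map_eq_span _ _ hr2 hr3]
    congr 1
    simp
  have hT0 : LinearMap.range (TensorProduct.map (LinearMap.id : V₂ →ₗ[R] V₂) A₃.subtype)
      = Submodule.span R {e₂ 0 ⊗ₜ[R] e₃ 0, e₂ 1 ⊗ₜ[R] e₃ 0} := by
    rw [range_map_eq_span _ _ hid2 hr3]
    congr 1
    ext x
    simp [Set.image2_insert_left, Set.image2_singleton_left, Set.image2_singleton_right,
      Set.image_insert_eq]
    all_goals tauto
  have h0T : LinearMap.range (TensorProduct.map A₂.subtype (LinearMap.id : V₃ →ₗ[R] V₃))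
      = Submodule.span R {e₂ 0 ⊗ₜ[R] e₃ 0, e₂ 0 ⊗ₜ[R] e₃ 1} := by
    rw [range_map_eq_span _ _ hr2 hid3]
    congr 1
    ext x
    simp [Set.image2_insert_left, Set.image2_singleton_left, Set.image2_singleton_right,
      Set.image_insert_eq]
    all_goals tauto
  have hTT : LinearMap.range (TensorProduct.map (LinearMap.id : V₂ →ₗ[R] V₂)
        (LinearMap.id : V₃ →ₗ[R] V₃))
      = Submodule.span R {e₂ 0 ⊗ₜ[R] e₃ 0, e₂ 0 ⊗ₜ[R] e₃ 1,
          e₂ 1 ⊗ₜ[R] e₃ 0, e₂ 1 ⊗ₜ[R] e₃ 1} := by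
    rw [range_map_eq_span _ _ hid2 hid3]
    congr 1
    ext x
    simp [Set.image2_insert_left, Set.image2_singleton_left, Set.image2_singleton_right,
      Set.image_insert_eq]
    tauto
  -- index sets
  set Fpp : Finset (Fin 2 × Fin 2 × Fin 2) := {(0, 0, 0)} with hFpp
  set Fp : Finset (Fin 2 × Fin 2 × Fin 2) :=
    {(0, 0, 0), (1, 0, 0), (0, 1, 0), (0, 0, 1)} with hFp
  set Fm : Finset (Fin 2 × Fin 2 × Fin 2) :=
    {(0, 0, 0), (1, 0, 0), (0, 1, 0), (0, 0, 1), (1, 1, 0), (1, 0, 1), (0, 1, 1)} with hFm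
  have hVpp : Vpp = Submodule.span R (E '' (↑Fpp : Set _)) := by
    unfold Vpp
    rw [range_map_eq_span _ _ hr1 h00]
    congr 1
    ext x
    simp [hFpp, hEapp]
  have hVp : Vp = Submodule.span R (E '' (↑Fp : Set _)) := by
    unfold Vp
    rw [range_map_eq_span _ _ hid1 h00, range_map_eq_span _ _ hr1 hT0,
      range_map_eq_span _ _ hr1 h0T, ← Submodule.span_union, ← Submodule.span_union]
    congr 1
    ext x
    simp [hFp, hEapp, Set.image2_insert_left,
      Set.image2_singleton_left, Set.image2_singleton_right, Set.image_insert_eq,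
      Finset.coe_insert]
    tauto
  have hVm : Vm = Submodule.span R (E '' (↑Fm : Set _)) := by
    unfold Vm
    rw [range_map_eq_span _ _ hid1 hT0, range_map_eq_span _ _ hid1 h0T,
      range_map_eq_span _ _ hr1 hTT, ← Submodule.span_union, ← Submodule.span_union]
    congr 1
    ext x
    simp [hFm, hEapp, Set.image2_insert_left,
      Set.image2_singleton_left, Set.image2_singleton_right, Set.image_insert_eq,
      Finset.coe_insert]
    tauto
  obtain ⟨hppf, hppr⟩ := spanImage_free_rank E (↑Fpp) Fpp.finite_toSet
  obtain ⟨hpf, hpr⟩ := spanImage_free_rank E (↑Fp) Fp.finite_toSet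
  obtain ⟨hmf, hmr⟩ := spanImage_free_rank E (↑Fm) Fm.finite_toSet
  have hsub1 : (↑Fpp : Set (Fin 2 × Fin 2 × Fin 2)) ⊆ ↑Fp :=
    Finset.coe_subset.mpr (by decide)
  have hsub2 : (↑Fp : Set (Fin 2 × Fin 2 × Fin 2)) ⊆ ↑Fm :=
    Finset.coe_subset.mpr (by decide)
  obtain ⟨hq1f, hq1r⟩ := nested_span_image E (↑Fpp) (↑Fp) hsub1 (Set.toFinite _)
  obtain ⟨hq2f, hq2r⟩ := nested_span_image E (↑Fp) (↑Fm) hsub2 (Set.toFinite _)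
  obtain ⟨hq3f, hq3r⟩ := quot_span_image E (↑Fm) (Set.toFinite _)
  have cpp : Nat.card ↥(↑Fpp : Set (Fin 2 × Fin 2 × Fin 2)) = 1 := by
    rw [Nat.card_coe_set_eq, Set.ncard_coe_finset]; decide
  have cp : Nat.card ↥(↑Fp : Set (Fin 2 × Fin 2 × Fin 2)) = 4 := by
    rw [Nat.card_coe_set_eq, Set.ncard_coe_finset]; decide
  have cm : Nat.card ↥(↑Fm : Set (Fin 2 × Fin 2 × Fin 2)) = 7 := by
    rw [Nat.card_coe_set_eq, Set.ncard_coe_finset]; decide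
  have cq1 : Nat.card ↥((↑Fp : Set (Fin 2 × Fin 2 × Fin 2)) \ ↑Fpp) = 3 := by
    rw [← Finset.coe_sdiff, Nat.card_coe_set_eq, Set.ncard_coe_finset]; decide
  have cq2 : Nat.card ↥((↑Fm : Set (Fin 2 × Fin 2 × Fin 2)) \ ↑Fp) = 3 := by
    rw [← Finset.coe_sdiff, Nat.card_coe_set_eq, Set.ncard_coe_finset]; decide
  have cq3 : Nat.card ↥((↑Fm : Set (Fin 2 × Fin 2 × Fin 2))ᶜ) = 1 := by
    rw [← Finset.coe_compl, Nat.card_coe_set_eq, Set.ncard_coe_finset]; decide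
  refine ⟨?_, ?_, ?_, ?_, ?_, ?_, ?_, ?_, ?_, ?_, ?_, ?_, ?_, ?_, ?_, ?_⟩
  · rw [hVpp, hVp]; exact Submodule.span_mono (Set.image_mono hsub1)
  · rw [hVp, hVm]; exact Submodule.span_mono (Set.image_mono hsub2)
  · rw [hVpp]; exact hppf
  · rw [hVpp, hppr, cpp]; norm_num
  · rw [hVp]; exact hpf
  · rw [hVp, hpr, cp]; norm_num
  · rw [hVm]; exact hmf
  · rw [hVm, hmr, cm]; norm_num
  · exact Module.Free.of_basis E
  · rw [rank_eq_card_basis E]; norm_num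
  · haveI := hq1f; exact Module.Free.of_equiv (comap_quot_equiv hVpp hVp).symm
  · rw [(comap_quot_equiv hVpp hVp).rank_eq, hq1r, cq1]; norm_num
  · haveI := hq2f; exact Module.Free.of_equiv (comap_quot_equiv hVp hVm).symm
  · rw [(comap_quot_equiv hVp hVm).rank_eq, hq2r, cq2]; norm_num
  · rw [hVm]; exact hq3f
  · rw [hVm, hq3r, cq3]; norm_num
end
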